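/- arXiv:2506.21391 — 2 statements merged into one kernel-verified Lean document; each statement's English description precedes it below -/
import Mathlib

section
/- For every n ≥ 1, the n-dimensional hypercube Q_n is Hamiltonian laceable: for any two vertices x and y of Q_n with opposite parity (i.e., lying in different parts of the bipartition), there is a Hamiltonian path of Q_n from x to y. -/
open SimpleGraph Finset
open scoped Classical

/-- The `n`-dimensional hypercube graph: vertices are `Fin n → Bool`,
adjacent iff they differ in exactly one coordinate. -/
def Q (n : ℕ) : SimpleGraph (Fin n → Bool) :=
  SimpleGraph.fromRel fun x y => (Finset.univ.filter fun i => x i ≠ y i).card = 1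

/-- Parity of a vertex of the hypercube: sum of coordinates mod 2. -/
def qparity {n : ℕ} (x : Fin n → Bool) : ZMod 2 :=
  ∑ i, if x i then 1 else 0

lemma Q_adj {n : ℕ} {x y : Fin n → Bool} :
    (Q n).Adj x y ↔ (Finset.univ.filter fun i => x i ≠ y i).card = 1 := by
  rw [Q, SimpleGraph.fromRel_adj]
  constructor
  · rintro ⟨hne, h | h⟩
    · exact h
    · convert h using 2
      ext i
      simp only [Finset.mem_filter]
      rw [ne_comm]
  · intro h
    refine ⟨?_, Or.inl h⟩
    rintro rfl
    simp at h

lemma adj_parity {n : ℕ} {x y : Fin n → Bool} (h : (Q n).Adj x y) :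
    qparity x ≠ qparity y := by
  have hc := Q_adj.mp h
  have hsum : qparity x + qparity y = 1 := by
    rw [qparity, qparity, ← Finset.sum_add_distrib]
    have : ∀ i : Fin n, ((if x i then 1 else 0) + (if y i then 1 else 0) : ZMod 2)
        = if x i ≠ y i then 1 else 0 := by
      intro i
      cases hx : x i <;> cases hy : y i <;> simp <;> decide
    rw [Finset.sum_congr rfl fun i _ => this i, Finset.sum_boole, hc]
    norm_num
  intro heq
  rw [heq, ← two_mul] at hsum
  have h2 : (2 : ZMod 2) = 0 := by decide
  rw [h2, zero_mul] at hsum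
  exact absurd hsum (by decide)

lemma filter_card_castSucc {n : ℕ} (P : Fin (n + 1) → Prop) [DecidablePred P] :
    (Finset.univ.filter P).card
      = (Finset.univ.filter fun i : Fin n => P i.castSucc).card
        + (if P (Fin.last n) then 1 else 0) := by
  have h1 : ((Finset.univ.filter P).card : ℕ)
      = ∑ i : Fin (n + 1), if P i then 1 else 0 := by
    rw [Finset.sum_boole]; norm_num
  rw [h1, Fin.sum_univ_castSucc]
  congr 1
  rw [Finset.sum_boole]; norm_num

lemma adj_snoc {n : ℕ} {x y : Fin n → Bool} (b : Bool) (h : (Q n).Adj x y) :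
    (Q (n + 1)).Adj (Fin.snoc x b) (Fin.snoc y b) := by
  rw [Q_adj] at h ⊢
  rw [filter_card_castSucc]
  simpa using h

lemma adj_snoc_flip {n : ℕ} (x : Fin n → Bool) (b c : Bool) (hbc : b ≠ c) :
    (Q (n + 1)).Adj (Fin.snoc x b) (Fin.snoc x c) := by
  rw [Q_adj, filter_card_castSucc]
  simp [hbc]

/-- The embedding of `Q n` into `Q (n+1)` fixing the last coordinate to `b`. -/
def liftHom (n : ℕ) (b : Bool) : Q n →g Q (n + 1) :=
  ⟨fun x => Fin.snoc x b, fun h => adj_snoc b h⟩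

@[simp] lemma liftHom_apply (n : ℕ) (b : Bool) (x : Fin n → Bool) :
    liftHom n b x = Fin.snoc x b := rfl

lemma liftHom_coe (n : ℕ) (b : Bool) :
    ⇑(liftHom n b) = (fun x : Fin n → Bool => (Fin.snoc x b : Fin (n+1) → Bool)) := rfl

lemma snoc_injective {n : ℕ} (b : Bool) :
    Function.Injective (fun x : Fin n → Bool => Fin.snoc x b : _ → Fin (n + 1) → Bool) := by
  intro x y h
  funext i
  have := congrFun h i.castSucc
  simpa using this

lemma snoc_inj {n : ℕ} {x y : Fin n → Bool} {b c : Bool}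
    (h : (Fin.snoc x b : Fin (n + 1) → Bool) = Fin.snoc y c) : x = y ∧ b = c := by
  constructor
  · funext i
    have := congrFun h i.castSucc
    simpa using this
  · have := congrFun h (Fin.last n)
    simpa using this

lemma qparity_snoc {n : ℕ} (x : Fin n → Bool) (b : Bool) :
    qparity (Fin.snoc x b : Fin (n + 1) → Bool)
      = qparity x + (if b then 1 else 0) := by
  rw [qparity, qparity, Fin.sum_univ_castSucc]
  simp

lemma exists_adj {n : ℕ} (hn : 1 ≤ n) (x : Fin n → Bool) :
    ∃ z, (Q n).Adj x z := by
  set i0 : Fin n := ⟨0, hn⟩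
  refine ⟨Function.update x i0 (!(x i0)), Q_adj.mpr ?_⟩
  have : (Finset.univ.filter fun i => x i ≠ Function.update x i0 (!(x i0)) i) = {i0} := by
    ext i
    simp only [Finset.mem_filter, Finset.mem_univ, true_and, Finset.mem_singleton]
    constructor
    · intro hi
      by_contra hne
      rw [Function.update_of_ne hne] at hi
      exact hi rfl
    · rintro rfl
      rw [Function.update_self]
      cases x i0 <;> simp
  rw [this, Finset.card_singleton]

lemma count_map_snoc {n : ℕ} (l : List (Fin n → Bool)) (b c : Bool) (w : Fin n → Bool) :
    (l.map (fun v => Fin.snoc v b : _ → Fin (n + 1) → Bool)).count (Fin.snoc w c)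
      = if b = c then l.count w else 0 := by
  by_cases hbc : b = c
  · subst hbc
    rw [if_pos rfl]
    exact List.count_map_of_injective l _ (snoc_injective b) w
  · rw [if_neg hbc]
    rw [List.count_eq_zero]
    intro hmem
    obtain ⟨a, _, ha⟩ := List.mem_map.mp hmem
    exact hbc (snoc_inj ha).2

lemma zmod2_aux (P Qy Z B C : ZMod 2) (h1 : P + B ≠ Qy + C) (h2 : Z ≠ P)
    (h3 : B + C = 1) : Z ≠ Qy := by
  revert h1 h2 h3
  revert P Qy Z B C
  decide

lemma hypercube_main : ∀ n : ℕ, 1 ≤ n → ∀ x y : Fin n → Bool,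
    qparity x ≠ qparity y → ∃ p : (Q n).Walk x y, p.IsHamiltonian := by
  intro n hn
  induction n, hn using Nat.le_induction with
  | base =>
    intro x y hxy
    have hxy0 : x 0 ≠ y 0 := by
      intro h
      apply hxy
      have : x = y := funext fun i => by rw [Fin.eq_zero i]; exact h
      rw [this]
    have hadj : (Q 1).Adj x y := by
      rw [Q_adj]
      have : (Finset.univ.filter fun i : Fin 1 => x i ≠ y i) = Finset.univ := by
        ext i
        simp only [Finset.mem_filter, Finset.mem_univ, true_and, iff_true]
        rw [Fin.eq_zero i]
        exact hxy0
      rw [this]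
      simp
    refine ⟨Walk.cons hadj Walk.nil, ?_⟩
    intro v
    have hv : v = x ∨ v = y := by
      by_cases hvx : v 0 = x 0
      · left; funext i; rw [Fin.eq_zero i]; exact hvx
      · right; funext i; rw [Fin.eq_zero i]
        cases h1 : v 0 <;> cases h2 : x 0 <;> cases h3 : y 0 <;> simp_all
    have hne : x ≠ y := fun h => hxy0 (congrFun h 0)
    rcases hv with rfl | rfl
    · simp [Walk.support_cons, List.count_cons, hne.symm]
    · simp [Walk.support_cons, List.count_cons, hne]
  | succ n hn IH =>
    intro x y hxy
    obtain ⟨x', b, rfl⟩ : ∃ x' b, x = Fin.snoc x' b :=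
      ⟨_, _, (Fin.snoc_init_self x).symm⟩
    obtain ⟨y', c, rfl⟩ : ∃ y' c, y = Fin.snoc y' c :=
      ⟨_, _, (Fin.snoc_init_self y).symm⟩
    rw [qparity_snoc, qparity_snoc] at hxy
    by_cases hbc : b = c
    · -- same half
      subst hbc
      have hxy' : qparity x' ≠ qparity y' := fun h => hxy (by rw [h])
      obtain ⟨p, hp⟩ := IH x' y' hxy'
      cases p with
      | nil => exact absurd rfl hxy'
      | @cons _ u _ h p' =>
        have hu : qparity x' ≠ qparity u := adj_parity h
        obtain ⟨q, hq⟩ := IH x' u hu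
        refine ⟨Walk.cons (adj_snoc_flip x' b (!b) (by simp))
          (((q.map (liftHom n (!b))).copy (liftHom_apply _ _ _) (liftHom_apply _ _ _)).append
            (Walk.cons (adj_snoc_flip u (!b) b (by simp)) ((p'.map (liftHom n b)).copy (liftHom_apply _ _ _) (liftHom_apply _ _ _)))), ?_⟩
        intro v
        obtain ⟨w, d, rfl⟩ : ∃ w d, v = Fin.snoc w d :=
          ⟨_, _, (Fin.snoc_init_self v).symm⟩
        rw [Walk.support_cons, Walk.support_append, Walk.support_copy, Walk.support_map,
          Walk.support_cons, List.tail_cons, Walk.support_copy, Walk.support_map]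
        rw [List.count_cons, List.count_append]
        simp only [liftHom_coe]
        rw [count_map_snoc, count_map_snoc]
        have hpcount := hp w
        rw [Walk.support_cons, List.count_cons] at hpcount
        simp only [beq_iff_eq] at hpcount ⊢
        by_cases hd : d = b
        · subst hd
          rw [if_neg (show ¬((!d) = d) by simp), if_pos rfl]
          by_cases hw : w = x'
          · subst hw
            rw [if_pos rfl] at hpcount
            rw [if_pos rfl]
            omega
          · rw [if_neg (fun h => hw h.symm)] at hpcount
            rw [if_neg (fun h' => hw ((snoc_inj h').1).symm)]
            omega
        · have hd' : d = !b := by cases d <;> cases b <;> simp_all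
          subst hd'
          rw [if_pos rfl, if_neg (show ¬(b = !b) by simp),
            if_neg (show ¬((Fin.snoc x' b : Fin (n+1) → Bool) = Fin.snoc w !b) from
              fun h' => by have := (snoc_inj h').2; simp at this), hq w]
    · -- different halves
      obtain ⟨z, hz⟩ := exists_adj hn x'
      have hxz : qparity x' ≠ qparity z := adj_parity hz
      have hBC : (if b then (1 : ZMod 2) else 0) + (if c then 1 else 0) = 1 := by
        cases b <;> cases c <;> simp_all <;> decide
      have hzy : qparity z ≠ qparity y' := zmod2_aux _ _ _ _ _ hxy hxz.symm hBC
      obtain ⟨q1, h1⟩ := IH x' z hxz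
      obtain ⟨q2, h2⟩ := IH z y' hzy
      refine ⟨((q1.map (liftHom n b)).copy (liftHom_apply _ _ _) (liftHom_apply _ _ _)).append
        (Walk.cons (adj_snoc_flip z b c hbc) ((q2.map (liftHom n c)).copy (liftHom_apply _ _ _) (liftHom_apply _ _ _))), ?_⟩
      intro v
      obtain ⟨w, d, rfl⟩ : ∃ w d, v = Fin.snoc w d :=
        ⟨_, _, (Fin.snoc_init_self v).symm⟩
      rw [Walk.support_append, Walk.support_copy, Walk.support_map, Walk.support_cons, List.tail_cons,
        Walk.support_copy, Walk.support_map, List.count_append]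
      simp only [liftHom_coe]
      rw [count_map_snoc, count_map_snoc]
      by_cases hd : d = b
      · subst hd
        rw [if_pos rfl, if_neg (show ¬(c = d) from fun h => hbc h.symm), h1 w]
      · have hd' : d = c := by cases d <;> cases b <;> cases c <;> simp_all
        subst hd'
        rw [if_neg (show ¬(b = d) from fun h => hd h.symm), if_pos rfl, h2 w]

theorem hypercube_hamiltonian_laceable (n : ℕ) (hn : 1 ≤ n)
    (x y : Fin n → Bool) (hxy : qparity x ≠ qparity y) :
    ∃ p : (Q n).Walk x y, p.IsHamiltonian := by
  exact hypercube_main n hn x y hxy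
end

section
/- Let n ≥ 2, let x, y be vertices of Q_n with p(x) ≠ p(y), and let f be an edge of Q_n with f ≠ xy. Then Q_n has a Hamiltonian path from x to y that passes through the edge f. -/
open SimpleGraph Finset
open scoped Classical

/-! ### Basic infrastructure -/

abbrev V (n : ℕ) := Fin n → Bool

lemma filter_ne_comm {n : ℕ} (x y : V n) :
    (Finset.univ.filter fun i => x i ≠ y i) = (Finset.univ.filter fun i => y i ≠ x i) :=
  Finset.filter_congr fun i _ => by simp [ne_comm]

lemma adj_iff {n : ℕ} {x y : V n} :
    (Q n).Adj x y ↔ (Finset.univ.filter fun i => x i ≠ y i).card = 1 := by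
  constructor
  · intro h
    rw [Q, SimpleGraph.fromRel_adj] at h
    rcases h.2 with h1 | h1
    · convert h1 using 2
    · rw [filter_ne_comm]
      convert h1 using 2
  · intro h
    rw [Q, SimpleGraph.fromRel_adj]
    have hne : x ≠ y := by
      rintro rfl
      simp at h
    refine ⟨hne, Or.inl ?_⟩
    convert h using 2

instance qadjdec {n : ℕ} : DecidableRel (Q n).Adj := fun _ _ =>
  decidable_of_iff _ adj_iff.symm

lemma qparity_add {n : ℕ} (x y : V n) :
    qparity x + qparity y = ((Finset.univ.filter fun i => x i ≠ y i).card : ZMod 2) := by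
  classical
  rw [qparity, qparity, ← Finset.sum_add_distrib, Finset.card_filter, Nat.cast_sum]
  refine Finset.sum_congr rfl fun i _ => ?_
  cases hx : x i <;> cases hy : y i <;> simp <;> decide

lemma qparity_ne_of_adj {n : ℕ} {x y : V n} (h : (Q n).Adj x y) :
    qparity x ≠ qparity y := by
  have h1 := qparity_add x y
  rw [adj_iff.mp h] at h1
  intro he
  rw [he, CharTwo.add_self_eq_zero] at h1
  simp at h1

/-- append a last coordinate -/
def sb {n : ℕ} (b : Bool) (v : V n) : V (n + 1) := Fin.snoc v b

lemma sb_inj {n : ℕ} {b : Bool} : Function.Injective (sb (n := n) b) := by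
  intro u v h
  funext i
  have := congrFun h i.castSucc
  simpa [sb] using this

lemma sb_last {n : ℕ} (b : Bool) (v : V n) : sb b v (Fin.last n) = b := by simp [sb]

lemma sb_ne_sb {n : ℕ} {b c : Bool} (h : b ≠ c) (u v : V n) : sb b u ≠ sb c v := by
  intro he
  exact h (by rw [← sb_last b u, ← sb_last c v, he])

lemma card_filter_sb {n : ℕ} (b c : Bool) (u v : V n) :
    (Finset.univ.filter fun i => sb b u i ≠ sb c v i).card
      = (Finset.univ.filter fun i => u i ≠ v i).card + (if b = c then 0 else 1) := by
  classical
  rw [Finset.card_filter, Finset.card_filter, Fin.sum_univ_castSucc]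
  simp only [sb, Fin.snoc_castSucc, Fin.snoc_last]
  congr 1
  by_cases h : b = c <;> simp [h]

lemma adj_sb {n : ℕ} (b : Bool) {u v : V n} :
    (Q (n + 1)).Adj (sb b u) (sb b v) ↔ (Q n).Adj u v := by
  rw [adj_iff, adj_iff, card_filter_sb]
  simp

lemma adj_cross {n : ℕ} {b c : Bool} (h : b ≠ c) (u : V n) :
    (Q (n + 1)).Adj (sb b u) (sb c u) := by
  rw [adj_iff, card_filter_sb]
  simp [h]

lemma qparity_sb {n : ℕ} (b : Bool) (v : V n) :
    qparity (sb b v) = qparity v + (if b then 1 else 0) := by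
  rw [qparity, qparity, Fin.sum_univ_castSucc]
  simp [sb]

lemma sb_surj {n : ℕ} (w : V (n + 1)) : w = sb (w (Fin.last n)) (Fin.init w) := by
  simp [sb, Fin.snoc_init_self]

/-- flip one coordinate -/
def fl {n : ℕ} (i : Fin n) (x : V n) : V n := Function.update x i (!x i)

lemma fl_ne {n : ℕ} (i : Fin n) (x : V n) : fl i x ≠ x := by
  intro h
  have := congrFun h i
  simp [fl] at this

lemma fl_apply_ne {n : ℕ} {i j : Fin n} (h : j ≠ i) (x : V n) : fl i x j = x j := by
  simp [fl, Function.update_of_ne h]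

lemma adj_fl {n : ℕ} (i : Fin n) (x : V n) : (Q n).Adj x (fl i x) := by
  rw [adj_iff]
  rw [Finset.card_eq_one]
  refine ⟨i, ?_⟩
  ext j
  simp only [Finset.mem_filter, Finset.mem_univ, true_and, Finset.mem_singleton]
  constructor
  · intro hj
    by_contra hji
    exact hj (by rw [fl_apply_ne hji] at hj; simp at hj)
  · rintro rfl
    simp [fl]

lemma fl_ne_fl {n : ℕ} {i j : Fin n} (h : i ≠ j) (x : V n) : fl i x ≠ fl j x := by
  intro he
  have := congrFun he i
  rw [fl_apply_ne h x] at this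
  simp [fl] at this

lemma adj_elim {n : ℕ} {x y : V n} (h : (Q n).Adj x y) : ∃ i, y = fl i x := by
  rw [adj_iff, Finset.card_eq_one] at h
  obtain ⟨i, hi⟩ := h
  refine ⟨i, funext fun j => ?_⟩
  by_cases hj : j = i
  · subst hj
    have : j ∈ Finset.univ.filter fun k => x k ≠ y k := by rw [hi]; simp
    simp only [Finset.mem_filter] at this
    cases hyj : y j <;> cases hxj : x j <;> simp [fl, hyj, hxj] at this ⊢
  · have : j ∉ Finset.univ.filter fun k => x k ≠ y k := by rw [hi]; simp [hj]
    simp only [Finset.mem_filter, Finset.mem_univ, true_and, not_not] at this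
    rw [fl_apply_ne hj, this]

lemma qparity_fl {n : ℕ} (i : Fin n) (x : V n) : qparity (fl i x) = qparity x + 1 := by
  have h := qparity_ne_of_adj (adj_fl i x)
  have h2 : ∀ a b : ZMod 2, a ≠ b → a = b + 1 := by decide
  exact h2 _ _ (Ne.symm h)

lemma comp_perm_adj {n : ℕ} (σ : Equiv.Perm (Fin n)) {x y : V n} :
    (Q n).Adj (x ∘ σ) (y ∘ σ) ↔ (Q n).Adj x y := by
  rw [adj_iff, adj_iff]
  have h : (Finset.univ.filter fun i => (x ∘ σ) i ≠ (y ∘ σ) i)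
      = (Finset.univ.filter fun i => x i ≠ y i).map σ.symm.toEmbedding := by
    ext j
    simp only [Finset.mem_filter, Finset.mem_univ, true_and, Finset.mem_map,
      Equiv.coe_toEmbedding, Function.comp_apply]
    constructor
    · intro h; exact ⟨σ j, h, by simp⟩
    · rintro ⟨i, hi, rfl⟩; simpa using hi
  rw [h, Finset.card_map]

lemma comp_perm_qparity {n : ℕ} (σ : Equiv.Perm (Fin n)) (x : V n) :
    qparity (x ∘ σ) = qparity x := by
  rw [qparity, qparity]
  exact Fintype.sum_equiv σ _ _ (fun i => rfl)

lemma comp_perm_inj {n : ℕ} (σ : Equiv.Perm (Fin n)) :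
    Function.Injective (fun v : V n => v ∘ σ) := by
  intro u v h
  funext i
  have := congrFun h (σ.symm i)
  simpa using this

lemma sym2_congr {α β : Type*} (g : α → β) {p q r t : α} (h : s(p, q) = s(r, t)) :
    s(g p, g q) = s(g r, g t) := by
  rw [← Sym2.map_pair_eq, ← Sym2.map_pair_eq, h]

/-! ### Hamiltonian lists -/

structure HamL (n : ℕ) (x y : V n) (L : List (V n)) : Prop where
  chain : L.Chain' (Q n).Adj
  nodup : L.Nodup
  cover : ∀ v, v ∈ L
  hd : L.head? = some x
  lst : L.getLast? = some y

def EdgeIn {n : ℕ} (e : Sym2 (V n)) (L : List (V n)) : Prop :=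
  ∃ A u v B, L = A ++ u :: v :: B ∧ e = s(u, v)

lemma EdgeIn_append_left {n : ℕ} {e : Sym2 (V n)} {L M : List (V n)} (h : EdgeIn e L) :
    EdgeIn e (L ++ M) := by
  obtain ⟨A, u, v, B, rfl, he⟩ := h
  exact ⟨A, u, v, B ++ M, by simp, he⟩

lemma EdgeIn_append_right {n : ℕ} {e : Sym2 (V n)} {L M : List (V n)} (h : EdgeIn e M) :
    EdgeIn e (L ++ M) := by
  obtain ⟨A, u, v, B, rfl, he⟩ := h
  exact ⟨L ++ A, u, v, B, by simp, he⟩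

lemma EdgeIn_map {n m : ℕ} {u v : V n} {L : List (V n)} (g : V n → V m)
    (h : EdgeIn s(u, v) L) : EdgeIn s(g u, g v) (L.map g) := by
  obtain ⟨A, p, q, B, rfl, he⟩ := h
  refine ⟨A.map g, g p, g q, B.map g, by simp, ?_⟩
  exact sym2_congr g he

lemma HamL.ne_nil {n : ℕ} {x y : V n} {L : List (V n)} (h : HamL n x y L) : L ≠ [] := by
  intro hL; rw [hL] at h; simpa using h.hd

lemma HamL.reverse {n : ℕ} {x y : V n} {L : List (V n)} (h : HamL n x y L) :
    HamL n y x L.reverse := by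
  refine ⟨?_, List.nodup_reverse.mpr h.nodup, fun v => by simpa using h.cover v, ?_, ?_⟩
  · simp only [List.Chain']
    rw [List.isChain_reverse]
    exact h.chain.imp fun a b hab => (Q n).adj_symm hab
  · rw [List.head?_reverse]
    exact h.lst
  · rw [List.getLast?_reverse]
    exact h.hd

lemma EdgeIn_reverse {n : ℕ} {e : Sym2 (V n)} {L : List (V n)} (h : EdgeIn e L) :
    EdgeIn e L.reverse := by
  obtain ⟨A, u, v, B, rfl, he⟩ := h
  refine ⟨B.reverse, v, u, A.reverse, by simp, by rw [he, Sym2.eq_swap]⟩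

lemma HamL.length_eq {n : ℕ} {x y : V n} {L : List (V n)} (h : HamL n x y L) :
    L.length = 2 ^ n := by
  have h1 : L.toFinset = Finset.univ :=
    Finset.eq_univ_iff_forall.mpr fun v => List.mem_toFinset.mpr (h.cover v)
  have h2 := List.toFinset_card_of_nodup h.nodup
  rw [h1, Finset.card_univ] at h2
  rw [← h2]
  simp

lemma HamL.adj_of_decomp {n : ℕ} {x y u v : V n} {A B : List (V n)}
    (h : HamL n x y (A ++ u :: v :: B)) : (Q n).Adj u v := by
  have hc := h.chain
  simp only [List.Chain'] at hc
  rw [List.isChain_split] at hc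
  exact (List.isChain_cons_cons.mp hc.2).1

lemma HamL.exists_cons2 {n : ℕ} {x y : V n} {L : List (V n)} (h : HamL n x y L)
    (hxy : x ≠ y) : ∃ u v B, L = u :: v :: B := by
  match L, h with
  | [], h => exact absurd rfl h.ne_nil
  | [a], h =>
    exfalso
    apply hxy
    have h1 := h.hd
    have h2 := h.lst
    simp at h1 h2
    rw [← h1, ← h2]
  | a :: b :: T, _ => exact ⟨a, b, T, rfl⟩

lemma chain_map_sb {n : ℕ} (b : Bool) {L : List (V n)} (h : L.Chain' (Q n).Adj) :
    (L.map (sb b)).Chain' (Q (n + 1)).Adj :=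
  List.isChain_map_of_isChain _ (fun _ _ hab => (adj_sb b).mpr hab) h

lemma disj_map_sb {n : ℕ} {b c : Bool} (h : b ≠ c) (L M : List (V n)) :
    (L.map (sb b)).Disjoint (M.map (sb c)) := by
  intro a haL haM
  simp only [List.mem_map] at haL haM
  obtain ⟨p, _, rfl⟩ := haL
  obtain ⟨q, _, hq⟩ := haM
  exact sb_ne_sb (Ne.symm h) q p hq

lemma head?_append_piece {n : ℕ} (A M : List (V n)) (u : V n) :
    (A ++ [u]).head? = (A ++ u :: M).head? := by cases A <;> simp

/-! ### Splicing constructions -/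

lemma splice {n : ℕ} (b : Bool) {x y u v : V n} {A B L1 : List (V n)}
    (h0 : HamL n x y (A ++ u :: v :: B)) (h1 : HamL n u v L1) :
    HamL (n + 1) (sb b x) (sb b y)
      ((A ++ [u]).map (sb b) ++ (L1.map (sb (!b)) ++ (v :: B).map (sb b))) := by
  have hbb : b ≠ !b := by cases b <;> decide
  have hchain := h0.chain
  simp only [List.Chain'] at hchain
  rw [List.isChain_split] at hchain
  obtain ⟨hc1, hc2⟩ := hchain
  rw [List.isChain_cons_cons] at hc2
  have hnd : ((A ++ [u]) ++ (v :: B)).Nodup := by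
    have := h0.nodup; simpa using this
  rw [List.nodup_append] at hnd
  have hlast1 : (A ++ [u]).getLast? = some u := by
    rw [List.getLast?_append_cons]; rfl
  refine ⟨?_, ?_, ?_, ?_, ?_⟩
  · simp only [List.Chain']
    rw [List.isChain_append]
    refine ⟨chain_map_sb b hc1, ?_, ?_⟩
    · rw [List.isChain_append]
      refine ⟨chain_map_sb (!b) h1.chain, chain_map_sb b hc2.2, ?_⟩
      intro p hp q hq
      rw [List.getLast?_map, h1.lst, Option.mem_def, Option.map_some] at hp
      rw [List.head?_map] at hq
      simp only [List.head?_cons, Option.map_some, Option.mem_def] at hq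
      rw [← Option.mem_def, Option.mem_some_iff] at hp hq
      subst hp; subst hq
      exact adj_cross (Ne.symm hbb) v
    · intro p hp q hq
      rw [List.getLast?_map, hlast1, Option.mem_def, Option.map_some] at hp
      rw [List.head?_append_of_ne_nil _ (by simp [h1.ne_nil]), List.head?_map, h1.hd] at hq
      simp only [Option.map_some, Option.mem_def] at hq
      rw [← Option.mem_def, Option.mem_some_iff] at hp hq
      subst hp; subst hq
      exact adj_cross hbb u
  · rw [List.nodup_append]
    refine ⟨hnd.1.map sb_inj, ?_, ?_⟩
    · rw [List.nodup_append]
      exact ⟨h1.nodup.map sb_inj, hnd.2.1.map sb_inj,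
        fun a ha c hc hac => disj_map_sb (Ne.symm hbb) _ _ ha (hac ▸ hc)⟩
    · intro a ha c ha2 hac
      subst hac
      rcases List.mem_append.mp ha2 with ha2 | ha2
      · exact disj_map_sb hbb _ _ ha ha2
      · simp only [List.mem_map] at ha ha2
        obtain ⟨p, hp, rfl⟩ := ha
        obtain ⟨q, hq, hpq⟩ := ha2
        have : q = p := sb_inj hpq
        subst this
        exact hnd.2.2 _ hp _ hq rfl
  · intro w
    have hcb : w (Fin.last n) = b ∨ w (Fin.last n) = !b := by
      cases b <;> cases h : w (Fin.last n) <;> simp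
    rcases hcb with hcb | hcb
    · rw [sb_surj w, hcb]
      have : Fin.init w ∈ (A ++ [u]) ++ (v :: B) := by
        have := h0.cover (Fin.init w); simpa using this
      rcases List.mem_append.mp this with h | h
      · exact List.mem_append.mpr (Or.inl (List.mem_map_of_mem h))
      · exact List.mem_append.mpr (Or.inr (List.mem_append.mpr
          (Or.inr (List.mem_map_of_mem h))))
    · rw [sb_surj w, hcb]
      exact List.mem_append.mpr (Or.inr (List.mem_append.mpr
        (Or.inl (List.mem_map_of_mem (h1.cover _)))))
  · rw [List.head?_append_of_ne_nil _ (by simp), List.head?_map,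
      head?_append_piece A (v :: B) u, h0.hd]
    rfl
  · rw [List.getLast?_append_of_ne_nil _ (by simp),
      List.getLast?_append_of_ne_nil _ (by simp), List.getLast?_map]
    have h3 : (v :: B).getLast? = some y := by
      have := h0.lst
      rwa [List.getLast?_append_cons] at this
    rw [h3]; rfl

lemma joinH {n : ℕ} (b : Bool) {x w y : V n} {L0 L1 : List (V n)}
    (h0 : HamL n x w L0) (h1 : HamL n w y L1) :
    HamL (n + 1) (sb b x) (sb (!b) y) (L0.map (sb b) ++ L1.map (sb (!b))) := by
  have hbb : b ≠ !b := by cases b <;> decide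
  refine ⟨?_, ?_, ?_, ?_, ?_⟩
  · simp only [List.Chain']
    rw [List.isChain_append]
    refine ⟨chain_map_sb b h0.chain, chain_map_sb (!b) h1.chain, ?_⟩
    intro p hp q hq
    rw [List.getLast?_map, h0.lst] at hp
    rw [List.head?_map, h1.hd] at hq
    simp only [Option.map_some, Option.mem_def] at hp hq
    rw [← Option.mem_def, Option.mem_some_iff] at hp hq
    subst hp; subst hq
    exact adj_cross hbb w
  · exact (h0.nodup.map sb_inj).append (h1.nodup.map sb_inj) (disj_map_sb hbb _ _)
  · intro z
    have hcb : z (Fin.last n) = b ∨ z (Fin.last n) = !b := by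
      cases b <;> cases h : z (Fin.last n) <;> simp
    rcases hcb with hcb | hcb
    · rw [sb_surj z, hcb]
      exact List.mem_append.mpr (Or.inl (List.mem_map_of_mem (h0.cover _)))
    · rw [sb_surj z, hcb]
      exact List.mem_append.mpr (Or.inr (List.mem_map_of_mem (h1.cover _)))
  · rw [List.head?_append_of_ne_nil _ (by simp [h0.ne_nil]), List.head?_map, h0.hd]; rfl
  · rw [List.getLast?_append_of_ne_nil _ (by simp [h1.ne_nil]), List.getLast?_map, h1.lst]; rfl

/-! ### Hamiltonian laceability -/

lemma exists_sb {n : ℕ} (x : V (n + 1)) : ∃ c x₀, x = sb c x₀ :=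
  ⟨_, _, sb_surj x⟩

lemma exists_sb_of_last {n : ℕ} {x : V (n + 1)} {c : Bool} (h : x (Fin.last n) = c) :
    ∃ x₀, x = sb c x₀ := by
  refine ⟨Fin.init x, ?_⟩
  conv_lhs => rw [sb_surj x]
  rw [h]

lemma last_eq_not {n : ℕ} {x : V (n + 1)} {c : Bool} (h : ¬ x (Fin.last n) = c) :
    x (Fin.last n) = !c := by
  cases hc : x (Fin.last n) <;> cases c <;> simp_all

lemma qparity_sb_ne {n : ℕ} {x₀ y₀ : V n} {c : Bool}
    (h : qparity (sb c x₀) ≠ qparity (sb c y₀)) : qparity x₀ ≠ qparity y₀ := by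
  rw [qparity_sb, qparity_sb] at h
  intro he
  exact h (by rw [he])

lemma qparity_sb_ne_mixed {n : ℕ} {x₀ y₀ : V n} {c : Bool}
    (h : qparity (sb c x₀) ≠ qparity (sb (!c) y₀)) : qparity x₀ + 1 ≠ qparity y₀ := by
  rw [qparity_sb, qparity_sb] at h
  cases c
  · simp only [Bool.not_false, if_true, if_false] at h
    have h2 : ∀ a b : ZMod 2, a + 0 ≠ b + 1 → a + 1 ≠ b := by decide
    exact h2 _ _ h
  · simp only [Bool.not_true, if_true, if_false] at h
    have h2 : ∀ a b : ZMod 2, a + 1 ≠ b + 0 → a + 1 ≠ b := by decide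
    exact h2 _ _ h

lemma zmod2_ne_add_one : ∀ a : ZMod 2, a ≠ a + 1 := by decide

/-! ### Hamiltonian laceability -/

lemma lace : ∀ (n : ℕ) (x y : V n), qparity x ≠ qparity y → ∃ L, HamL n x y L := by
  intro n
  induction n with
  | zero =>
    intro x y hq
    exact absurd (by rw [show x = y from funext fun i => i.elim0]) hq
  | succ n IHn =>
    intro x y hq
    obtain ⟨c, x₀, rfl⟩ := exists_sb x
    by_cases hxy : y (Fin.last n) = c
    · obtain ⟨y₀, rfl⟩ := exists_sb_of_last hxy
      have hq₀ : qparity x₀ ≠ qparity y₀ := qparity_sb_ne hq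
      obtain ⟨L0, hL0⟩ := IHn x₀ y₀ hq₀
      obtain ⟨u, v, B, rfl⟩ := hL0.exists_cons2 (fun h => hq₀ (by rw [h]))
      have hadj : (Q n).Adj u v := (List.isChain_cons_cons.mp hL0.chain).1
      obtain ⟨L1, hL1⟩ := IHn u v (qparity_ne_of_adj hadj)
      have h0 : HamL n x₀ y₀ ([] ++ u :: v :: B) := hL0
      exact ⟨_, splice c h0 hL1⟩
    · have hy' := last_eq_not hxy
      obtain ⟨y₀, rfl⟩ := exists_sb_of_last hy'
      cases n with
      | zero =>
        have hxy0 : x₀ = y₀ := funext fun i => i.elim0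
        subst hxy0
        refine ⟨[sb c x₀, sb (!c) x₀], ?_, ?_, ?_, rfl, rfl⟩
        · simp only [List.Chain']
          rw [List.isChain_pair]
          exact adj_cross (by cases c <;> decide) x₀
        · simp only [List.nodup_cons, List.mem_singleton, List.not_mem_nil,
            not_false_iff, List.nodup_nil, and_true]
          exact sb_ne_sb (by cases c <;> decide) x₀ x₀
        · intro v
          have hcb : v (Fin.last 0) = c ∨ v (Fin.last 0) = !c := by
            cases c <;> cases h : v (Fin.last 0) <;> simp
          have hv0 : Fin.init v = x₀ := funext fun i => i.elim0
          rcases hcb with hcb | hcb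
          · have : v = sb c x₀ := by rw [sb_surj v, hcb, hv0]
            rw [this]; simp
          · have : v = sb (!c) x₀ := by rw [sb_surj v, hcb, hv0]
            rw [this]; simp
      | succ m =>
        have hmix := qparity_sb_ne_mixed hq
        set w := fl 0 x₀ with hw
        have hqw : qparity w = qparity x₀ + 1 := qparity_fl 0 x₀
        have h1 : qparity x₀ ≠ qparity w := by
          rw [hqw]; exact zmod2_ne_add_one _
        have h2 : qparity w ≠ qparity y₀ := by
          rw [hqw]; exact hmix
        obtain ⟨L0, hL0⟩ := IHn x₀ w h1
        obtain ⟨L1, hL1⟩ := IHn w y₀ h2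
        exact ⟨_, joinH c hL0 hL1⟩

/-! ### Splicing while keeping a prescribed edge -/

lemma splice_keep {n : ℕ} (b : Bool) {x y : V n} {L0 : List (V n)} {e : Sym2 (V n)}
    (h : HamL n x y L0) (hlen : 3 ≤ L0.length) (he : EdgeIn e L0) :
    ∃ R, HamL (n + 1) (sb b x) (sb b y) R ∧ EdgeIn (Sym2.map (sb b) e) R := by
  obtain ⟨A, u, v, B, rfl, rfl⟩ := he
  cases B with
  | cons cc B' =>
    have heq : A ++ u :: v :: cc :: B' = (A ++ [u]) ++ v :: cc :: B' := by simp
    rw [heq] at h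
    have hadj : (Q n).Adj v cc := h.adj_of_decomp
    obtain ⟨L1, hL1⟩ := lace n v cc (qparity_ne_of_adj hadj)
    refine ⟨_, splice b h hL1, ?_⟩
    have h2 : EdgeIn s(u, v) ((A ++ [u]) ++ [v]) := ⟨A, u, v, [], by simp, rfl⟩
    rw [Sym2.map_pair_eq]
    exact EdgeIn_append_left (EdgeIn_map _ h2)
  | nil =>
    rcases List.eq_nil_or_concat' A with rfl | ⟨A'', cc, rfl⟩
    · exfalso; simp at hlen
    · have heq : (A'' ++ [cc]) ++ u :: v :: [] = A'' ++ cc :: u :: [v] := by simp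
      rw [heq] at h
      have hadj : (Q n).Adj cc u := h.adj_of_decomp
      obtain ⟨L1, hL1⟩ := lace n cc u (qparity_ne_of_adj hadj)
      refine ⟨_, splice b h hL1, ?_⟩
      have h2 : EdgeIn s(u, v) (u :: [v]) := ⟨[], u, v, [], rfl, rfl⟩
      rw [Sym2.map_pair_eq]
      exact EdgeIn_append_right (EdgeIn_append_right (EdgeIn_map _ h2))

/-! ### Finding an edge avoiding two given edges -/

lemma sym2_left_inj {n : ℕ} {z p q : V n} (hp : p ≠ z) (h : s(z, p) = s(z, q)) : p = q := by
  rw [Sym2.eq_iff] at h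
  rcases h with ⟨-, h2⟩ | ⟨h1, h2⟩
  · exact h2
  · exact absurd h2 hp

lemma exists_edge_avoid {n : ℕ} (hn : 2 ≤ n) (e1 e2 : Sym2 (V n)) (z : V n) :
    ∃ u v : V n, (Q n).Adj u v ∧ s(u, v) ≠ e1 ∧ s(u, v) ≠ e2 := by
  have h01 : (⟨0, by omega⟩ : Fin n) ≠ ⟨1, by omega⟩ := by
    intro h; simpa using congrArg Fin.val h
  set i0 : Fin n := ⟨0, by omega⟩
  set i1 : Fin n := ⟨1, by omega⟩
  -- three pairwise distinct candidate edges
  have hc12 : s(z, fl i0 z) ≠ s(z, fl i1 z) := by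
    intro h
    exact fl_ne_fl h01 z (sym2_left_inj (fl_ne i0 z) h)
  have hz3 : z ≠ fl i1 (fl i0 z) := by
    intro h
    have := congrFun h i0
    rw [fl_apply_ne h01 (fl i0 z)] at this
    simp [fl] at this
  have hc13 : s(fl i0 z, fl i1 (fl i0 z)) ≠ s(z, fl i0 z) := by
    intro h
    rw [Sym2.eq_iff] at h
    rcases h with ⟨h1, _⟩ | ⟨_, h2⟩
    · exact fl_ne i0 z h1
    · exact hz3 h2.symm
  have hc23 : s(fl i0 z, fl i1 (fl i0 z)) ≠ s(z, fl i1 z) := by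
    intro h
    rw [Sym2.eq_iff] at h
    rcases h with ⟨h1, _⟩ | ⟨h1, h2⟩
    · exact fl_ne i0 z h1
    · exact hz3 h2.symm
  by_cases h1 : s(z, fl i0 z) = e1 ∨ s(z, fl i0 z) = e2
  · by_cases h2 : s(z, fl i1 z) = e1 ∨ s(z, fl i1 z) = e2
    · have he1 : e1 = s(z, fl i0 z) ∨ e1 = s(z, fl i1 z) := by
        rcases h1 with h1 | h1
        · exact Or.inl h1.symm
        rcases h2 with h2 | h2
        · exact Or.inr h2.symm
        · exact absurd (h1.trans h2.symm) hc12
      have he2 : e2 = s(z, fl i0 z) ∨ e2 = s(z, fl i1 z) := by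
        rcases h1 with h1 | h1
        · rcases h2 with h2 | h2
          · exact absurd (h1.trans h2.symm) hc12
          · exact Or.inr h2.symm
        · exact Or.inl h1.symm
      refine ⟨fl i0 z, fl i1 (fl i0 z), adj_fl i1 (fl i0 z), ?_, ?_⟩
      · rcases he1 with he | he <;> rw [he]
        · exact hc13
        · exact hc23
      · rcases he2 with he | he <;> rw [he]
        · exact hc13
        · exact hc23
    · push_neg at h2
      exact ⟨z, fl i1 z, adj_fl i1 z, h2.1, h2.2⟩
  · push_neg at h1
    exact ⟨z, fl i0 z, adj_fl i0 z, h1.1, h1.2⟩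

/-! ### The main induction -/

def MainStmt (n : ℕ) : Prop :=
  ∀ x y a b : V n, (Q n).Adj a b → qparity x ≠ qparity y → s(a, b) ≠ s(x, y) →
    ∃ L, HamL n x y L ∧ EdgeIn s(a, b) L

lemma step_mixed {n : ℕ} (hn : 2 ≤ n) (IH : MainStmt n) (c : Bool) (x₀ y₀ a₀ b₀ : V n)
    (hab : (Q n).Adj a₀ b₀) (hq : qparity (sb c x₀) ≠ qparity (sb (!c) y₀)) :
    ∃ L, HamL (n + 1) (sb c x₀) (sb (!c) y₀) L ∧ EdgeIn s(sb c a₀, sb c b₀) L := by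
  have hmix : qparity x₀ + 1 ≠ qparity y₀ := qparity_sb_ne_mixed hq
  have h01 : (⟨0, by omega⟩ : Fin n) ≠ ⟨1, by omega⟩ := by
    intro h; simpa using congrArg Fin.val h
  set i0 : Fin n := ⟨0, by omega⟩
  set i1 : Fin n := ⟨1, by omega⟩
  -- choose w adjacent-parity to x₀ with s(x₀, w) ≠ s(a₀, b₀)
  have hwch : ∃ w : V n, qparity w = qparity x₀ + 1 ∧ s(x₀, w) ≠ s(a₀, b₀) := by
    by_cases h : s(x₀, fl i0 x₀) = s(a₀, b₀)
    · refine ⟨fl i1 x₀, qparity_fl i1 x₀, ?_⟩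
      intro h2
      exact fl_ne_fl h01 x₀ (sym2_left_inj (fl_ne i0 x₀) (h.trans h2.symm))
    · exact ⟨fl i0 x₀, qparity_fl i0 x₀, h⟩
  obtain ⟨w, hqw, hwne⟩ := hwch
  have h1 : qparity x₀ ≠ qparity w := by rw [hqw]; exact zmod2_ne_add_one _
  have h2 : qparity w ≠ qparity y₀ := by rw [hqw]; exact hmix
  obtain ⟨L0, hL0, heL0⟩ := IH x₀ w a₀ b₀ hab h1 (Ne.symm hwne)
  obtain ⟨L1, hL1⟩ := lace n w y₀ h2
  refine ⟨_, joinH c hL0 hL1, ?_⟩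
  exact EdgeIn_append_left (EdgeIn_map _ heL0)

lemma step_aligned {n : ℕ} (hn : 2 ≤ n) (IH : MainStmt n) (c : Bool) (a₀ b₀ : V n)
    (hab : (Q n).Adj a₀ b₀) (x y : V (n + 1)) (hq : qparity x ≠ qparity y)
    (hne : s(sb c a₀, sb c b₀) ≠ s(x, y)) :
    ∃ L, HamL (n + 1) x y L ∧ EdgeIn s(sb c a₀, sb c b₀) L := by
  by_cases hxc : x (Fin.last n) = c
  · obtain ⟨x₀, rfl⟩ := exists_sb_of_last hxc
    by_cases hyc : y (Fin.last n) = c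
    · -- case i : same side as the edge
      obtain ⟨y₀, rfl⟩ := exists_sb_of_last hyc
      have hq₀ : qparity x₀ ≠ qparity y₀ := qparity_sb_ne hq
      have hne₀ : s(a₀, b₀) ≠ s(x₀, y₀) := fun h => hne (sym2_congr (sb c) h)
      obtain ⟨L0, hL0, heL0⟩ := IH x₀ y₀ a₀ b₀ hab hq₀ hne₀
      have hlen : 3 ≤ L0.length := by
        rw [hL0.length_eq]
        calc (3:ℕ) ≤ 2 ^ 2 := by norm_num
        _ ≤ 2 ^ n := Nat.pow_le_pow_right (by norm_num) hn
      obtain ⟨R, hR, heR⟩ := splice_keep c hL0 hlen heL0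
      rw [Sym2.map_pair_eq] at heR
      exact ⟨R, hR, heR⟩
    · -- case iii : x on the edge side, y on the other side
      obtain ⟨y₀, rfl⟩ := exists_sb_of_last (last_eq_not hyc)
      exact step_mixed hn IH c x₀ y₀ a₀ b₀ hab hq
  · obtain ⟨x₀, rfl⟩ := exists_sb_of_last (last_eq_not hxc)
    by_cases hyc : y (Fin.last n) = c
    · -- case iv : y on the edge side, x on the other side
      obtain ⟨y₀, rfl⟩ := exists_sb_of_last hyc
      obtain ⟨L, hL, heL⟩ := step_mixed hn IH c y₀ x₀ a₀ b₀ hab (Ne.symm hq)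
      exact ⟨L.reverse, hL.reverse, EdgeIn_reverse heL⟩
    · -- case ii : both x and y on the side opposite to the edge
      obtain ⟨y₀, rfl⟩ := exists_sb_of_last (last_eq_not hyc)
      have hq₀ : qparity x₀ ≠ qparity y₀ := qparity_sb_ne hq
      obtain ⟨u, v, huv, hne1, hne2⟩ := exists_edge_avoid hn s(x₀, y₀) s(a₀, b₀) x₀
      obtain ⟨L1, hL1, heL1⟩ := IH x₀ y₀ u v huv hq₀ hne1
      obtain ⟨A, p, q, B, rfl, hpq⟩ := heL1
      have hadjpq : (Q n).Adj p q := hL1.adj_of_decomp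
      have hne2' : s(a₀, b₀) ≠ s(p, q) := by rw [← hpq]; exact Ne.symm hne2
      obtain ⟨L0, hL0, heL0⟩ := IH p q a₀ b₀ hab (qparity_ne_of_adj hadjpq) hne2'
      have hs := splice (!c) hL1 hL0
      rw [Bool.not_not] at hs
      refine ⟨_, hs, ?_⟩
      exact EdgeIn_append_right (EdgeIn_append_left (EdgeIn_map _ heL0))

set_option synthInstance.maxHeartbeats 1000000 in
set_option synthInstance.maxSize 1024 in
set_option maxRecDepth 10000 in
lemma base2 : ∀ x y a b : V 2, (Q 2).Adj a b → qparity x ≠ qparity y → s(a, b) ≠ s(x, y) →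
    ∃ z w : V 2, ((Q 2).Adj x z ∧ (Q 2).Adj z w ∧ (Q 2).Adj w y
      ∧ [x, z, w, y].Nodup ∧ (∀ v : V 2, v ∈ [x, z, w, y]))
      ∧ (s(a, b) = s(x, z) ∨ s(a, b) = s(z, w) ∨ s(a, b) = s(w, y)) := by decide

lemma main_stmt : ∀ n, 2 ≤ n → MainStmt n := by
  intro n hn
  induction n, hn using Nat.le_induction with
  | base =>
    intro x y a b hab hq hne
    obtain ⟨z, w, ⟨h1, h2, h3, hnd, hcov⟩, hedge⟩ := base2 x y a b hab hq hne
    refine ⟨[x, z, w, y], ⟨?_, hnd, hcov, rfl, rfl⟩, ?_⟩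
    · simp only [List.Chain']
      rw [List.isChain_cons_cons, List.isChain_cons_cons, List.isChain_pair]
      exact ⟨h1, h2, h3⟩
    · rcases hedge with h | h | h
      · exact ⟨[], x, z, [w, y], rfl, h⟩
      · exact ⟨[x], z, w, [y], rfl, h⟩
      · exact ⟨[x, z], w, y, [], rfl, h⟩
  | succ n hn IH =>
    intro x y a b hab hq hne
    by_cases hl : a (Fin.last n) = b (Fin.last n)
    · -- the prescribed edge lies within a half along the last coordinate
      obtain ⟨c, a₀, rfl⟩ := exists_sb a
      have hlb : b (Fin.last n) = c := by rw [← hl, sb_last]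
      obtain ⟨b₀, rfl⟩ := exists_sb_of_last hlb
      exact step_aligned hn IH c a₀ b₀ ((adj_sb c).mp hab) x y hq hne
    · -- the edge is along the last coordinate; swap coordinates 0 and last
      obtain ⟨i, rfl⟩ := adj_elim hab
      have hi : i = Fin.last n := by
        by_contra hii
        exact hl (fl_apply_ne (fun h => hii h.symm) a).symm
      subst hi
      have h0l : (⟨0, by omega⟩ : Fin (n + 1)) ≠ Fin.last n := by
        intro h
        have := congrArg Fin.val h
        simp [Fin.last] at this
        omega
      have hσinv : ∀ v : V (n + 1),
          (v ∘ Equiv.swap (⟨0, by omega⟩ : Fin (n + 1)) (Fin.last n))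
            ∘ Equiv.swap (⟨0, by omega⟩ : Fin (n + 1)) (Fin.last n) = v := by
        intro v
        funext j
        simp [Function.comp_apply, Equiv.swap_apply_self]
      set σ : Equiv.Perm (Fin (n + 1)) := Equiv.swap ⟨0, by omega⟩ (Fin.last n) with hσ
      have hlast' : (a ∘ σ) (Fin.last n) = (fl (Fin.last n) a ∘ σ) (Fin.last n) := by
        simp only [Function.comp_apply]
        rw [hσ, Equiv.swap_apply_right]
        exact (fl_apply_ne h0l a).symm
      have hab' : (Q (n + 1)).Adj (a ∘ σ) (fl (Fin.last n) a ∘ σ) :=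
        (comp_perm_adj σ).mpr (adj_fl (Fin.last n) a)
      have hq' : qparity (x ∘ σ) ≠ qparity (y ∘ σ) := by
        rw [comp_perm_qparity, comp_perm_qparity]; exact hq
      have hne' : s(a ∘ σ, fl (Fin.last n) a ∘ σ) ≠ s(x ∘ σ, y ∘ σ) := by
        intro h
        apply hne
        have h2 := sym2_congr (fun v : V (n + 1) => v ∘ σ) h
        simpa only [hσinv] using h2
      obtain ⟨c, a₀, ha₀⟩ : ∃ c a₀, a ∘ σ = sb c a₀ := ⟨_, _, sb_surj _⟩
      have hlb' : (fl (Fin.last n) a ∘ σ) (Fin.last n) = c := by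
        rw [← hlast', ha₀, sb_last]
      obtain ⟨b₀, hb₀⟩ := exists_sb_of_last hlb'
      rw [ha₀, hb₀] at hab' hne'
      obtain ⟨L, hL, heL⟩ :=
        step_aligned hn IH c a₀ b₀ ((adj_sb c).mp hab') (x ∘ σ) (y ∘ σ) hq' hne'
      -- transport back through σ
      have hmap : HamL (n + 1) x y (L.map (· ∘ σ)) := by
        have hadj2 : ∀ u v2 : V (n + 1),
            (Q (n + 1)).Adj u v2 → (Q (n + 1)).Adj (u ∘ σ) (v2 ∘ σ) :=
          fun u v2 h => (comp_perm_adj σ).mpr h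
        refine ⟨List.isChain_map_of_isChain _ hadj2 hL.chain,
          hL.nodup.map (comp_perm_inj σ), ?_, ?_, ?_⟩
        · intro v2
          have hv2 : (v2 ∘ σ) ∘ σ = v2 := hσinv v2
          rw [← hv2]
          exact List.mem_map_of_mem (hL.cover (v2 ∘ σ))
        · rw [List.head?_map, hL.hd, Option.map_some, hσinv]
        · rw [List.getLast?_map, hL.lst, Option.map_some, hσinv]
      refine ⟨L.map (· ∘ σ), hmap, ?_⟩
      have h3 := EdgeIn_map (· ∘ σ) heL
      rw [← ha₀, ← hb₀] at h3
      simpa only [hσinv] using h3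

/-! ### From lists to walks -/

def listEdges {α : Type*} : List α → List (Sym2 α)
  | a :: b :: T => s(a, b) :: listEdges (b :: T)
  | _ => []

lemma mem_listEdges_cons {α : Type*} {e : Sym2 α} {M : List α} (a : α)
    (h : e ∈ listEdges M) : e ∈ listEdges (a :: M) := by
  cases M with
  | nil => simp [listEdges] at h
  | cons m M' =>
    rw [show listEdges (a :: m :: M') = s(a, m) :: listEdges (m :: M') from rfl]
    exact List.mem_cons_of_mem _ h

lemma EdgeIn_mem_listEdges {n : ℕ} {e : Sym2 (V n)} {L : List (V n)} (h : EdgeIn e L) :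
    e ∈ listEdges L := by
  obtain ⟨A, u, v, B, rfl, rfl⟩ := h
  induction A with
  | nil =>
    rw [List.nil_append,
      show listEdges (u :: v :: B) = s(u, v) :: listEdges (v :: B) from rfl]
    exact List.mem_cons_self
  | cons a A' IH =>
    rw [List.cons_append]
    exact mem_listEdges_cons a IH

lemma walk_of_list {n : ℕ} : ∀ (L : List (V n)) (x y : V n), L.Chain' (Q n).Adj →
    L.head? = some x → L.getLast? = some y →
    ∃ w : (Q n).Walk x y, w.support = L ∧ w.edges = listEdges L
  | [], x, y, _, hx, _ => by simp at hx
  | [a], x, y, _, hx, hy => by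
    obtain rfl : a = x := by simpa using hx
    obtain rfl : a = y := by simpa using hy
    exact ⟨SimpleGraph.Walk.nil, by simp, by simp [listEdges]⟩
  | a :: b :: T, x, y, hc, hx, hy => by
    obtain rfl : a = x := by simpa using hx
    simp only [List.Chain'] at hc
    rw [List.isChain_cons_cons] at hc
    have hy' : (b :: T).getLast? = some y := by rw [← hy, List.getLast?_cons_cons]
    obtain ⟨w', hs, he⟩ := walk_of_list (b :: T) b y hc.2 rfl hy'
    refine ⟨SimpleGraph.Walk.cons hc.1 w', by simp [hs], ?_⟩
    rw [SimpleGraph.Walk.edges_cons, he]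
    rfl

theorem hamiltonian_path_through_prescribed_edge (n : ℕ) (hn : 2 ≤ n)
    (x y : Fin n → Bool) (hxy : qparity x ≠ qparity y)
    (f : Sym2 (Fin n → Bool)) (hf : f ∈ (Q n).edgeSet) (hfxy : f ≠ s(x, y)) :
    ∃ p : (Q n).Walk x y, p.IsHamiltonian ∧ f ∈ p.edges := by
  induction f using Sym2.ind with
  | _ a b =>
    have hab : (Q n).Adj a b := hf
    obtain ⟨L, hL, heL⟩ := main_stmt n hn x y a b hab hxy hfxy
    obtain ⟨w, hs, he⟩ := walk_of_list L x y hL.chain hL.hd hL.lst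
    refine ⟨w, ?_, ?_⟩
    · intro v
      rw [hs]
      exact List.count_eq_one_of_mem hL.nodup (hL.cover v)
    · rw [he]
      exact EdgeIn_mem_listEdges heL
end
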